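/- Let (X, ≼) be a countable quasi-ordered set. Then every increasing chain in (X, ≼) is maximal in (IC(X, ≼), ⊑) or is ⊑-below a maximal increasing chain. -/

import Mathlib

universe u

/-- An increasing chain in a quasi-ordered set `(X, r)`: an ordinal `len` together with a
family of elements of `X` indexed by the ordinals below `len`, such that `β < γ` implies
`x_β ≺ x_γ` (i.e. `x_β ≼ x_γ` and not `x_γ ≼ x_β`). -/
structure IncChain (X : Type u) (r : X → X → Prop) : Type (u + 1) where
  len : Ordinal.{u}
  val : (β : Ordinal.{u}) → β < len → X
  inc : ∀ (β γ : Ordinal.{u}) (hβ : β < len) (hγ : γ < len), β < γ →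
    r (val β hβ) (val γ hγ) ∧ ¬ r (val γ hγ) (val β hβ)

namespace IncChain

variable {X : Type u} {r : X → X → Prop}

/-- The domination quasi-order `⊑` on increasing chains. -/
def Le (A B : IncChain X r) : Prop :=
  ∀ (β : Ordinal.{u}) (hβ : β < A.len), ∃ (γ : Ordinal.{u}) (hγ : γ < B.len),
    r (A.val β hβ) (B.val γ hγ)

/-- The equivalence `≐` induced by `⊑`. -/
def Equiv (A B : IncChain X r) : Prop := A.Le B ∧ B.Le A

/-- `A ⊆ B`: every element of the chain `A` occurs in the chain `B`. -/
def Subset (A B : IncChain X r) : Prop :=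
  ∀ (β : Ordinal.{u}) (hβ : β < A.len), ∃ (γ : Ordinal.{u}) (hγ : γ < B.len),
    B.val γ hγ = A.val β hβ

/-- `A` is cofinal in `B`. -/
def Cofinal (A B : IncChain X r) : Prop := A.Subset B ∧ B.Le A

/-- The cofinality of a chain: the least ordinal indexing a chain cofinal in it. -/
noncomputable def cof (B : IncChain X r) : Ordinal.{u} :=
  sInf {α : Ordinal.{u} | ∃ A : IncChain X r, A.len = α ∧ A.Cofinal B}

/-- A maximal chain. -/
def Maximal (A : IncChain X r) : Prop := ∀ B : IncChain X r, A.Le B → B.Le A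

end IncChain

namespace IncChainAux

variable {X : Type u} {r : X → X → Prop}

/-- the down-set of a chain -/
def dset (C : IncChain X r) : Set X :=
  {x | ∃ (γ : Ordinal.{u}) (hγ : γ < C.len), r x (C.val γ hγ)}

lemma le_iff (hrefl : ∀ x, r x x) (htrans : ∀ a b c, r a b → r b c → r a c)
    (A B : IncChain X r) : A.Le B ↔ dset A ⊆ dset B := by
  constructor
  · rintro h x ⟨β, hβ, hx⟩
    obtain ⟨γ, hγ, h2⟩ := h β hβ
    exact ⟨γ, hγ, htrans _ _ _ hx h2⟩
  · intro h β hβ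
    exact h ⟨β, hβ, hrefl _⟩

lemma dset_directed (hrefl : ∀ x, r x x) (htrans : ∀ a b c, r a b → r b c → r a c)
    (B : IncChain X r) :
    ∀ x ∈ dset B, ∀ y ∈ dset B, ∃ z ∈ dset B, r x z ∧ r y z := by
  rintro x ⟨β, hβ, hx⟩ y ⟨γ, hγ, hy⟩
  rcases lt_trichotomy β γ with h | h | h
  · exact ⟨B.val γ hγ, ⟨γ, hγ, hrefl _⟩, htrans _ _ _ hx (B.inc β γ hβ hγ h).1, hy⟩
  · subst h; exact ⟨B.val β hβ, ⟨β, hβ, hrefl _⟩, hx, hy⟩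
  · exact ⟨B.val β hβ, ⟨β, hβ, hrefl _⟩, hx, htrans _ _ _ hy (B.inc γ β hγ hβ h).1⟩

lemma exists_chain [Countable X]
    (hrefl : ∀ x, r x x) (htrans : ∀ a b c, r a b → r b c → r a c)
    (U : Set X)
    (hdown : ∀ x y, y ∈ U → r x y → x ∈ U)
    (hdir : ∀ x ∈ U, ∀ y ∈ U, ∃ z ∈ U, r x z ∧ r y z) :
    ∃ C : IncChain X r, dset C = U := by
  rcases U.eq_empty_or_nonempty with hU | hU
  · refine ⟨⟨0, fun β hβ => absurd hβ (zero_le (a := β)).not_gt,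
      fun β γ hβ hγ _ => absurd hβ (zero_le (a := β)).not_gt⟩, ?_⟩
    rw [hU]; ext x; simp [dset]
  obtain ⟨u, hu⟩ := (Set.to_countable U).exists_eq_range hU
  have hun : ∀ n, u n ∈ U := fun n => hu ▸ Set.mem_range_self n
  have step : ∀ (p : {x // x ∈ U}) (n : ℕ), {z // z ∈ U ∧ r p.1 z ∧ r (u n) z} := fun p n =>
    Classical.indefiniteDescription _ (by
      obtain ⟨z, hz, h1, h2⟩ := hdir p.1 p.2 (u n) (hun n)
      exact ⟨z, hz, h1, h2⟩)
  let Gs : ℕ → {x // x ∈ U} := fun n =>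
    Nat.rec ⟨u 0, hun 0⟩ (fun n p => ⟨(step p (n + 1)).1, (step p (n + 1)).2.1⟩) n
  have hGsucc : ∀ n, Gs (n + 1) = ⟨(step (Gs n) (n + 1)).1, (step (Gs n) (n + 1)).2.1⟩ :=
    fun n => rfl
  have hstep : ∀ n, r (Gs n).1 (Gs (n + 1)).1 ∧ r (u (n + 1)) (Gs (n + 1)).1 := by
    intro n
    rw [hGsucc n]
    exact ⟨(step (Gs n) (n + 1)).2.2.1, (step (Gs n) (n + 1)).2.2.2⟩
  have hmono : ∀ n m : ℕ, n ≤ m → r (Gs n).1 (Gs m).1 := by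
    intro n m h
    induction h with
    | refl => exact hrefl _
    | step _ ih => exact htrans _ _ _ ih (hstep _).1
  have hcof : ∀ n, r (u n) (Gs n).1 := by
    intro n
    cases n with
    | zero => exact hrefl _
    | succ n => exact (hstep n).2
  by_cases htop : ∃ N, ∀ m, r (Gs m).1 (Gs N).1
  · obtain ⟨N, hN⟩ := htop
    refine ⟨⟨1, fun _ _ => (Gs N).1, ?_⟩, ?_⟩
    · intro β γ hβ hγ hlt
      rw [Ordinal.lt_one_iff_zero] at hγ
      subst hγ
      exact absurd hlt (zero_le (a := β)).not_gt
    · ext x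
      constructor
      · rintro ⟨γ, hγ, hx⟩
        exact hdown x _ (Gs N).2 hx
      · intro hx
        obtain ⟨n, hn⟩ : ∃ n, u n = x := by rwa [hu, Set.mem_range] at hx
        refine ⟨0, zero_lt_one, ?_⟩
        exact htrans _ _ _ (hn ▸ hcof n) (hN n)
  · push_neg at htop
    have step2 : ∀ N : ℕ, {m // ¬ r (Gs m).1 (Gs N).1} := fun N =>
      Classical.indefiniteDescription _ (htop N)
    let H : ℕ → ℕ := fun k => Nat.rec 0 (fun _ m => (step2 m).1) k
    have hHsucc : ∀ k, H (k + 1) = (step2 (H k)).1 := fun k => rfl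
    have hH : ∀ k, ¬ r (Gs (H (k + 1))).1 (Gs (H k)).1 := by
      intro k; rw [hHsucc k]; exact (step2 (H k)).2
    have hHlt : ∀ k, H k < H (k + 1) := by
      intro k
      refine lt_of_not_ge fun h => ?_
      exact hH k (hmono _ _ h)
    have hHmono : StrictMono H := strictMono_nat_of_lt_succ hHlt
    have hHle : ∀ n, n ≤ H n := fun n => hHmono.le_apply
    have hvalkey : ∀ (k : ℕ) (h : (k : Ordinal.{u}) < Ordinal.omega0),
        Classical.choose (Ordinal.lt_omega0.mp h) = k := by
      intro k h
      have h2 := Classical.choose_spec (Ordinal.lt_omega0.mp h)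
      exact_mod_cast h2.symm
    have hstrict : ∀ k l : ℕ, k < l →
        r (Gs (H k)).1 (Gs (H l)).1 ∧ ¬ r (Gs (H l)).1 (Gs (H k)).1 := by
      intro k l hkl
      refine ⟨hmono _ _ (hHmono hkl).le, fun hcon => ?_⟩
      exact hH k (htrans _ _ _ (hmono _ _ (hHmono.monotone hkl)) hcon)
    refine ⟨⟨Ordinal.omega0,
      fun β hβ => (Gs (H (Classical.choose (Ordinal.lt_omega0.mp hβ)))).1, ?_⟩, ?_⟩
    · intro β γ hβ hγ hlt
      have hβ2 := Classical.choose_spec (Ordinal.lt_omega0.mp hβ)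
      have hγ2 := Classical.choose_spec (Ordinal.lt_omega0.mp hγ)
      apply hstrict
      rw [hβ2, hγ2] at hlt
      exact_mod_cast hlt
    · ext x
      constructor
      · rintro ⟨γ, hγ, hx⟩
        exact hdown x _ (Gs _).2 hx
      · intro hx
        obtain ⟨n, hn⟩ : ∃ n, u n = x := by rwa [hu, Set.mem_range] at hx
        refine ⟨(n : Ordinal.{u}), Ordinal.nat_lt_omega0 n, ?_⟩
        show r x (Gs (H (Classical.choose
          (Ordinal.lt_omega0.mp (Ordinal.nat_lt_omega0 n))))).1
        rw [hvalkey n (Ordinal.nat_lt_omega0 n)]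
        exact htrans _ _ _ (hn ▸ hcof n) (hmono _ _ (hHle n))


end IncChainAux

open IncChainAux in
/-- if `(X, ≼)` is a countable quasi-ordered set, then every increasing chain
in `(X, ≼)` is maximal in `(IC(X, ≼), ⊑)` or is `⊑`-below a maximal increasing chain. -/
theorem stmt11 {X : Type u} {r : X → X → Prop} [Countable X]
    (hrefl : ∀ x, r x x) (htrans : ∀ a b c, r a b → r b c → r a c)
    (A : IncChain X r) :
    A.Maximal ∨ ∃ B : IncChain X r, B.Maximal ∧ A.Le B := by
  refine Or.inr ?_
  set S : Set (Set X) := {s | ∃ B : IncChain X r, A.Le B ∧ dset B = s} with hS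
  have hAS : dset A ∈ S := ⟨A, fun β hβ => ⟨β, hβ, hrefl _⟩, rfl⟩
  have hzorn : ∀ c ⊆ S, IsChain (· ⊆ ·) c → c.Nonempty →
      ∃ ub ∈ S, ∀ s ∈ c, s ⊆ ub := by
    intro c hc hchain hne
    obtain ⟨s₀, hs₀⟩ := hne
    obtain ⟨B₀, hAB₀, hB₀⟩ := hc hs₀
    set U : Set X := ⋃₀ c with hUdef
    have hdown : ∀ x y, y ∈ U → r x y → x ∈ U := by
      rintro x y ⟨s, hsc, hys⟩ hxy
      obtain ⟨B, _, hB⟩ := hc hsc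
      rw [← hB] at hys
      obtain ⟨γ, hγ, hy⟩ := hys
      exact ⟨s, hsc, by rw [← hB]; exact ⟨γ, hγ, htrans _ _ _ hxy hy⟩⟩
    have hdir : ∀ x ∈ U, ∀ y ∈ U, ∃ z ∈ U, r x z ∧ r y z := by
      rintro x ⟨s₁, h₁c, hx⟩ y ⟨s₂, h₂c, hy⟩
      have hsub : (x ∈ s₂ ∧ y ∈ s₂) ∨ (x ∈ s₁ ∧ y ∈ s₁) := by
        rcases eq_or_ne s₁ s₂ with h | h
        · subst h; exact Or.inl ⟨hx, hy⟩
        · rcases hchain h₁c h₂c h with h | h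
          · exact Or.inl ⟨h hx, hy⟩
          · exact Or.inr ⟨hx, h hy⟩
      rcases hsub with ⟨hx2, hy2⟩ | ⟨hx2, hy2⟩
      · obtain ⟨B, _, hB⟩ := hc h₂c
        subst hB
        obtain ⟨z, hz, h1, h2⟩ := dset_directed hrefl htrans B x hx2 y hy2
        exact ⟨z, ⟨_, h₂c, hz⟩, h1, h2⟩
      · obtain ⟨B, _, hB⟩ := hc h₁c
        subst hB
        obtain ⟨z, hz, h1, h2⟩ := dset_directed hrefl htrans B x hx2 y hy2
        exact ⟨z, ⟨_, h₁c, hz⟩, h1, h2⟩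
    obtain ⟨C, hC⟩ := exists_chain hrefl htrans U hdown hdir
    have hAC : A.Le C := by
      rw [le_iff hrefl htrans, hC]
      exact ((le_iff hrefl htrans A B₀).mp hAB₀).trans
        (hB₀ ▸ (Set.subset_sUnion_of_mem hs₀))
    exact ⟨U, ⟨C, hAC, hC⟩, fun s hs => Set.subset_sUnion_of_mem hs⟩
  obtain ⟨m, hAm, hm⟩ := zorn_subset_nonempty S hzorn _ hAS
  obtain ⟨B, hAB, hB⟩ := hm.1
  refine ⟨B, ?_, hAB⟩
  intro C hBC
  have hAC : A.Le C := by
    intro β hβ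
    obtain ⟨γ, hγ, h1⟩ := hAB β hβ
    obtain ⟨δ, hδ, h2⟩ := hBC γ hγ
    exact ⟨δ, hδ, htrans _ _ _ h1 h2⟩
  have hCS : dset C ∈ S := ⟨C, hAC, rfl⟩
  have h1 : m ⊆ dset C := hB ▸ (le_iff hrefl htrans B C).mp hBC
  have h2 : dset C ⊆ m := hm.2 hCS h1
  rw [le_iff hrefl htrans, hB]
  exact h2
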